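/- For a continuous-time control system with compact control range U, the invariance pressure can be computed along multiples of any fixed τ > 0: P_inv(f,Q) = limsup_{n→∞} (1/(nτ)) log a_{nτ}(f,Q) for every f ∈ C(U,ℝ). -/

import Mathlib

open Filter Topology
open scoped ENNReal

noncomputable section

/-- Admissible controls: measurable functions `ℝ → ℝ^m` with values in the control
range `U`. -/
def Ctrl (m : ℕ) (U : Set (Fin m → ℝ)) : Type :=
  {ω : ℝ → (Fin m → ℝ) // Measurable ω ∧ ∀ t, ω t ∈ U}

/-- `a_T(f,Q)` for a continuous-time system with solution map `φ`: the infimum over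
`(T,Q)`-spanning (finite) sets `S` of controls of `∑_{ω ∈ S} exp (∫_0^T f(ω(t)) dt)`,
where `S` is `(T,Q)`-spanning if for every `x ∈ Q` some `ω ∈ S` keeps
`φ(t,x,ω) ∈ Q` for all `t ∈ [0,T]`. -/
def aCT {X : Type*} (m : ℕ) (U : Set (Fin m → ℝ)) (φ : ℝ → X → Ctrl m U → X)
    (Q : Set X) (f : (Fin m → ℝ) → ℝ) (T : ℝ) : ℝ≥0∞ :=
  ⨅ (S : Finset (Ctrl m U))
    (_ : ∀ x ∈ Q, ∃ ω ∈ S, ∀ t ∈ Set.Icc (0 : ℝ) T, φ t x ω ∈ Q),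
    ∑ ω ∈ S, ENNReal.ofReal (Real.exp (∫ t in (0 : ℝ)..T, f (ω.1 t)))

namespace InvPressureAux

variable {m : ℕ} {U : Set (Fin m → ℝ)} {f : (Fin m → ℝ) → ℝ} {M : ℝ}

private lemma ctrlInt (hf : Continuous f) (hM : ∀ u ∈ U, |f u| ≤ M)
    (ω : Ctrl m U) (a b : ℝ) :
    IntervalIntegrable (fun t => f (ω.1 t)) MeasureTheory.volume a b :=
  IntervalIntegrable.mono_fun' (g := fun _ => M) intervalIntegrable_const
    ((hf.measurable.comp ω.2.1).aestronglyMeasurable)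
    (Filter.Eventually.of_forall fun t => by
      simpa [Real.norm_eq_abs] using hM _ (ω.2.2 t))

private lemma integ_ge (hf : Continuous f) (hM : ∀ u ∈ U, |f u| ≤ M)
    (ω : Ctrl m U) {a b : ℝ} (hab : a ≤ b) :
    -(M * (b - a)) ≤ ∫ t in a..b, f (ω.1 t) := by
  have h := intervalIntegral.integral_mono_on (f := fun _ : ℝ => -M)
      (g := fun t => f (ω.1 t)) hab intervalIntegrable_const (ctrlInt hf hM ω a b)
      (fun t _ => (abs_le.1 (hM _ (ω.2.2 t))).1)
  rw [intervalIntegral.integral_const, smul_eq_mul] at h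
  nlinarith [h]

private lemma integ_split (hf : Continuous f) (hM : ∀ u ∈ U, |f u| ≤ M)
    (ω : Ctrl m U) {T T' : ℝ} (hTT' : T ≤ T') :
    (∫ t in (0:ℝ)..T, f (ω.1 t)) ≤ (∫ t in (0:ℝ)..T', f (ω.1 t)) + M * (T' - T) := by
  have hadd := intervalIntegral.integral_add_adjacent_intervals
      (ctrlInt hf hM ω 0 T) (ctrlInt hf hM ω T T')
  have hge := integ_ge hf hM ω hTT'
  linarith

variable {X : Type*} {φ : ℝ → X → Ctrl m U → X} {Q : Set X}

private lemma aCT_le_sum {T : ℝ} {S : Finset (Ctrl m U)}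
    (hS : ∀ x ∈ Q, ∃ ω ∈ S, ∀ t ∈ Set.Icc (0:ℝ) T, φ t x ω ∈ Q) :
    aCT m U φ Q f T ≤
      ∑ ω ∈ S, ENNReal.ofReal (Real.exp (∫ t in (0:ℝ)..T, f (ω.1 t))) :=
  iInf_le_of_le S (iInf_le _ hS)

private lemma aCT_le_mul (hf : Continuous f) (hM : ∀ u ∈ U, |f u| ≤ M)
    {T T' : ℝ} (hTT' : T ≤ T') :
    aCT m U φ Q f T ≤
      ENNReal.ofReal (Real.exp (M * (T' - T))) * aCT m U φ Q f T' := by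
  set c : ℝ≥0∞ := ENNReal.ofReal (Real.exp (M * (T' - T))) with hc
  have hc0 : c ≠ 0 := by
    simp [hc, ENNReal.ofReal_eq_zero, not_le, Real.exp_pos]
  have hcT : c ≠ ⊤ := ENNReal.ofReal_ne_top
  rw [mul_comm, ← ENNReal.div_le_iff_le_mul (Or.inl hc0) (Or.inl hcT)]
  refine le_iInf fun S => le_iInf fun hS => ?_
  rw [ENNReal.div_le_iff_le_mul (Or.inl hc0) (Or.inl hcT)]
  have hspan : ∀ x ∈ Q, ∃ ω ∈ S, ∀ t ∈ Set.Icc (0:ℝ) T, φ t x ω ∈ Q := by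
    intro x hx
    obtain ⟨ω, hωS, hω⟩ := hS x hx
    exact ⟨ω, hωS, fun t ht => hω t ⟨ht.1, ht.2.trans hTT'⟩⟩
  calc aCT m U φ Q f T
      ≤ ∑ ω ∈ S, ENNReal.ofReal (Real.exp (∫ t in (0:ℝ)..T, f (ω.1 t))) :=
        aCT_le_sum hspan
    _ ≤ ∑ ω ∈ S,
          ENNReal.ofReal (Real.exp (∫ t in (0:ℝ)..T', f (ω.1 t))) * c := by
        refine Finset.sum_le_sum fun ω _ => ?_
        rw [hc, ← ENNReal.ofReal_mul (Real.exp_nonneg _), ← Real.exp_add]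
        exact ENNReal.ofReal_le_ofReal (Real.exp_le_exp.2 (integ_split hf hM ω hTT'))
    _ = (∑ ω ∈ S, ENNReal.ofReal (Real.exp (∫ t in (0:ℝ)..T', f (ω.1 t)))) * c := by
        rw [Finset.sum_mul]

private lemma le_aCT (hf : Continuous f) (hM : ∀ u ∈ U, |f u| ≤ M)
    (hQne : Q.Nonempty) {T : ℝ} (h0 : 0 ≤ T) :
    ENNReal.ofReal (Real.exp (-(M * T))) ≤ aCT m U φ Q f T := by
  refine le_iInf fun S => le_iInf fun hS => ?_
  obtain ⟨x, hx⟩ := hQne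
  obtain ⟨ω, hωS, -⟩ := hS x hx
  calc ENNReal.ofReal (Real.exp (-(M * T)))
      ≤ ENNReal.ofReal (Real.exp (∫ t in (0:ℝ)..T, f (ω.1 t))) := by
        refine ENNReal.ofReal_le_ofReal (Real.exp_le_exp.2 ?_)
        have := integ_ge hf hM ω h0
        simpa using this
    _ ≤ ∑ ω ∈ S, ENNReal.ofReal (Real.exp (∫ t in (0:ℝ)..T, f (ω.1 t))) :=
        Finset.single_le_sum
          (f := fun ω : Ctrl m U => ENNReal.ofReal (Real.exp (∫ t in (0:ℝ)..T, f (ω.1 t))))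
          (fun _ _ => zero_le) hωS

private lemma aCT_ne_top {T : ℝ} {S : Finset (Ctrl m U)}
    (hS : ∀ x ∈ Q, ∃ ω ∈ S, ∀ t ∈ Set.Icc (0:ℝ) T, φ t x ω ∈ Q) :
    aCT m U φ Q f T ≠ ⊤ :=
  ne_top_of_le_ne_top
    (ENNReal.sum_lt_top.2 fun _ _ => ENNReal.ofReal_lt_top).ne (aCT_le_sum hS)

end InvPressureAux

open InvPressureAux in
/-- For a continuous-time control system with compact control range, the invariance
pressure `P_inv(f,Q) = limsup_{T→∞} (1/T) log a_T(f,Q)` can be computed along the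
multiples of any fixed `τ > 0`. -/
theorem invariance_pressure_discretization {X : Type*} [MetricSpace X]
    (m : ℕ) (U : Set (Fin m → ℝ)) (hU : IsCompact U) (hUne : U.Nonempty)
    (φ : ℝ → X → Ctrl m U → X) (Q : Set X) (hQ : IsCompact Q)
    (hinv : ∀ x ∈ Q, ∃ ω : Ctrl m U, ∀ t, 0 ≤ t → φ t x ω ∈ Q)
    (f : (Fin m → ℝ) → ℝ) (hf : Continuous f) (τ : ℝ) (hτ : 0 < τ) :
    Filter.atTop.limsup (fun T : ℝ => ((T⁻¹ : ℝ) : EReal) * ENNReal.log (aCT m U φ Q f T))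
      = Filter.atTop.limsup (fun n : ℕ =>
          (((n * τ : ℝ)⁻¹ : ℝ) : EReal) * ENNReal.log (aCT m U φ Q f (n * τ))) := by
  -- a bound for `f` on `U`
  obtain ⟨M, hM⟩ : ∃ M : ℝ, ∀ u ∈ U, |f u| ≤ M := by
    obtain ⟨M, hM⟩ := (hU.image_of_continuousOn
      ((continuous_abs.comp hf).continuousOn)).bddAbove
    exact ⟨M, fun u hu => hM ⟨u, hu, rfl⟩⟩
  have hM0 : 0 ≤ M := le_trans (abs_nonneg _) (hM _ hUne.choose_spec)
  set a : ℝ → ℝ≥0∞ := aCT m U φ Q f with ha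
  set u : ℝ → EReal := fun T => ((T⁻¹ : ℝ) : EReal) * ENNReal.log (a T) with hu
  -- the easy direction: the sequence limsup is at most the continuous one
  have key₁ : Filter.atTop.limsup (fun n : ℕ => u ((n : ℝ) * τ)) ≤ Filter.atTop.limsup u := by
    have htend : Tendsto (fun n : ℕ => (n : ℝ) * τ) atTop atTop :=
      Tendsto.atTop_mul_const hτ tendsto_natCast_atTop_atTop
    have heq : Filter.atTop.limsup (fun n : ℕ => u ((n : ℝ) * τ))
        = Filter.limsup u (Filter.map (fun n : ℕ => (n : ℝ) * τ) atTop) := by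
      rw [Filter.limsup, Filter.limsup, Filter.map_map]; rfl
    rw [heq]
    exact limsup_le_limsup_of_le htend
  refine le_antisymm ?_ key₁
  -- trivial case: `Q` empty
  rcases Set.eq_empty_or_nonempty Q with hQe | hQne
  · refine le_trans (limsup_le_of_le (by isBoundedDefault) ?_) bot_le
    filter_upwards [eventually_gt_atTop (0 : ℝ)] with T hT
    have haT : a T = 0 := by
      refine le_antisymm ?_ zero_le
      have h := aCT_le_sum (f := f) (φ := φ) (Q := Q) (T := T) (S := (∅ : Finset (Ctrl m U)))
        (by simp [hQe])
      simpa [ha] using h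
    simp only [hu, haT, ENNReal.log_zero]
    rw [EReal.coe_mul_bot_of_pos (by exact_mod_cast inv_pos.2 hT)]
  by_cases hsp : ∀ T : ℝ, ∃ S : Finset (Ctrl m U),
      ∀ x ∈ Q, ∃ ω ∈ S, ∀ t ∈ Set.Icc (0:ℝ) T, φ t x ω ∈ Q
  · -- main case: finite spanning sets exist for every time
    have ha_ne_top : ∀ T : ℝ, a T ≠ ⊤ := by
      intro T
      obtain ⟨S, hS⟩ := hsp T
      exact aCT_ne_top hS
    have ha_ne_zero : ∀ T : ℝ, 0 ≤ T → a T ≠ 0 := by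
      intro T hT
      refine ne_of_gt (lt_of_lt_of_le ?_ (le_aCT hf hM hQne hT))
      simp [ENNReal.ofReal_pos, Real.exp_pos]
    set A : ℝ → ℝ := fun T => (a T).toReal with hA
    have hApos : ∀ T : ℝ, 0 ≤ T → 0 < A T := fun T hT =>
      ENNReal.toReal_pos (ha_ne_zero T hT) (ha_ne_top T)
    have hlog : ∀ T : ℝ, 0 ≤ T → ENNReal.log (a T) = ((Real.log (A T) : ℝ) : EReal) :=
      fun T hT => ENNReal.log_pos_real (ha_ne_zero T hT) (ha_ne_top T)
    -- the key real-valued estimate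
    have hAle : ∀ T T' : ℝ, 0 ≤ T → T ≤ T' →
        Real.log (A T) ≤ M * (T' - T) + Real.log (A T') := by
      intro T T' hT hTT'
      have h1 : a T ≤ ENNReal.ofReal (Real.exp (M * (T' - T))) * a T' :=
        aCT_le_mul hf hM hTT'
      have h2 : A T ≤ Real.exp (M * (T' - T)) * A T' := by
        have := ENNReal.toReal_mono
          (ENNReal.mul_ne_top ENNReal.ofReal_ne_top (ha_ne_top T')) h1
        rwa [ENNReal.toReal_mul, ENNReal.toReal_ofReal (Real.exp_nonneg _)] at this
      calc Real.log (A T) ≤ Real.log (Real.exp (M * (T' - T)) * A T') :=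
            Real.log_le_log (hApos T hT) h2
        _ = M * (T' - T) + Real.log (A T') := by
            rw [Real.log_mul (Real.exp_ne_zero _) (hApos T' (hT.trans hTT')).ne',
              Real.log_exp]
    -- conclude via the `∀ z > limsup` criterion
    rw [← EReal.le_of_forall_lt_iff_le]
    intro z hz
    obtain ⟨c, hLc, hcz⟩ := EReal.exists_between_coe_real hz
    have hcz' : c < z := by exact_mod_cast hcz
    have hev : ∀ᶠ n : ℕ in atTop, u ((n : ℝ) * τ) < (c : EReal) :=
      eventually_lt_of_limsup_lt hLc
    obtain ⟨N, hN⟩ := eventually_atTop.1 hev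
    -- eventual bound for the continuous-time function
    have hbound : ∀ᶠ T : ℝ in atTop, u T ≤ (z : EReal) := by
      rw [eventually_atTop]
      refine ⟨max (max ((max N 1 : ℕ) * τ) 1) ((M + |c|) * τ / (z - c)), fun T hT => ?_⟩
      have hT1 : (1 : ℝ) ≤ T := le_trans (le_max_of_le_left (le_max_right _ _)) hT
      have hT0 : 0 < T := lt_of_lt_of_le one_pos hT1
      set n : ℕ := ⌈T / τ⌉₊ with hn
      have hTn : T ≤ (n : ℝ) * τ := by
        rw [← div_le_iff₀ hτ]; exact Nat.le_ceil _
      have hnT : (n : ℝ) * τ ≤ T + τ := by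
        have h1 : (n : ℝ) < T / τ + 1 :=
          Nat.ceil_lt_add_one (div_nonneg hT0.le hτ.le)
        have := mul_le_mul_of_nonneg_right h1.le hτ.le
        calc (n : ℝ) * τ ≤ (T / τ + 1) * τ := this
          _ = T + τ := by field_simp
      have hNn : max N 1 ≤ n := by
        have h1 : ((max N 1 : ℕ) : ℝ) ≤ T / τ := by
          rw [le_div_iff₀ hτ]
          exact le_trans (le_max_of_le_left (le_max_left _ _)) hT
        exact_mod_cast h1.trans (Nat.le_ceil _)
      have hnN : N ≤ n := le_trans (le_max_left _ _) hNn
      have hn1 : 1 ≤ n := le_trans (le_max_right _ _) hNn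
      have hnτpos : 0 < (n : ℝ) * τ := by
        have : (1 : ℝ) ≤ (n : ℝ) := by exact_mod_cast hn1
        nlinarith
      -- the sequence bound at `n`
      have hseq : Real.log (A ((n : ℝ) * τ)) < c * ((n : ℝ) * τ) := by
        have h1 := hN n hnN
        simp only [hu] at h1
        rw [hlog _ hnτpos.le, ← EReal.coe_mul] at h1
        have h2 : ((n : ℝ) * τ)⁻¹ * Real.log (A ((n : ℝ) * τ)) < c := by
          exact_mod_cast h1
        have h3 := mul_lt_mul_of_pos_left h2 hnτpos
        rw [← mul_assoc, mul_inv_cancel₀ hnτpos.ne', one_mul] at h3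
        nlinarith [h3]
      -- combine
      have hkey : Real.log (A T) ≤ c * T + (M + |c|) * τ := by
        have h1 := hAle T ((n : ℝ) * τ) hT0.le hTn
        have h2 : M * ((n : ℝ) * τ - T) ≤ M * τ :=
          mul_le_mul_of_nonneg_left (by linarith) hM0
        have h3 : c * ((n : ℝ) * τ) ≤ c * T + |c| * τ := by
          have habs1 : c * ((n : ℝ) * τ - T) ≤ |c| * ((n : ℝ) * τ - T) :=
            mul_le_mul_of_nonneg_right (le_abs_self c) (by linarith)
          have habs2 : |c| * ((n : ℝ) * τ - T) ≤ |c| * τ :=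
            mul_le_mul_of_nonneg_left (by linarith) (abs_nonneg c)
          nlinarith
        nlinarith
      have hfrac : (M + |c|) * τ / T ≤ z - c := by
        rw [div_le_iff₀ hT0]
        have hzc : 0 < z - c := by linarith
        have hT2 : (M + |c|) * τ / (z - c) ≤ T :=
          le_trans (le_max_right _ _) hT
        calc (M + |c|) * τ = (z - c) * ((M + |c|) * τ / (z - c)) := by
              field_simp
          _ ≤ (z - c) * T := mul_le_mul_of_nonneg_left hT2 hzc.le
          _ = (z - c) * T := rfl
      have hfinal : T⁻¹ * Real.log (A T) ≤ z := by
        have h1 : T⁻¹ * Real.log (A T) ≤ T⁻¹ * (c * T + (M + |c|) * τ) :=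
          mul_le_mul_of_nonneg_left hkey (inv_nonneg.2 hT0.le)
        have h2 : T⁻¹ * (c * T + (M + |c|) * τ) = c + (M + |c|) * τ / T := by
          field_simp
        rw [h2] at h1
        linarith
      simp only [hu]
      rw [hlog _ hT0.le, ← EReal.coe_mul]
      exact_mod_cast hfinal
    exact limsup_le_of_le (by isBoundedDefault) hbound
  · -- no finite spanning set at some time: both sides are `⊤`
    push_neg at hsp
    obtain ⟨T₀, hT₀⟩ := hsp
    have htop : ∀ T : ℝ, T₀ ≤ T → a T = ⊤ := by
      intro T hT
      rw [ha, aCT]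
      refine iInf_eq_top.2 fun S => iInf_eq_top.2 fun hS => ?_
      exfalso
      obtain ⟨x, hx, hbad⟩ := hT₀ S
      obtain ⟨ω, hωS, hω⟩ := hS x hx
      obtain ⟨t, ht, hnot⟩ := hbad ω hωS
      exact hnot (hω t ⟨ht.1, ht.2.trans hT⟩)
    have hRHS : ∀ᶠ n : ℕ in atTop, u ((n : ℝ) * τ) = ⊤ := by
      have h1 : Tendsto (fun n : ℕ => (n : ℝ) * τ) atTop atTop :=
        Tendsto.atTop_mul_const hτ tendsto_natCast_atTop_atTop
      filter_upwards [h1.eventually_ge_atTop T₀, h1.eventually_gt_atTop 0] with n h2 h3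
      simp only [hu]
      rw [htop _ h2, ENNReal.log_top,
        EReal.coe_mul_top_of_pos (by exact_mod_cast inv_pos.2 h3)]
    have : (⊤ : EReal) ≤ Filter.atTop.limsup (fun n : ℕ => u ((n : ℝ) * τ)) :=
      le_limsup_of_frequently_le (hRHS.mono fun n hn => hn.ge).frequently
    exact le_trans le_top this
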